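/- The variational-discrete optimal control problem admits a unique solution: there exists exactly one pair (u,y) ∈ U_ad × Y with a(y,v) = b(u,v) + f(v) for all v ∈ Y that minimizes J(u,y) = ½‖E y − z‖²_H + (α/2)‖u‖²_U over all such admissible pairs. Equivalently, the reduced cost u ↦ J(u, S(u)), where S(u) ∈ Y is the unique solution of a(S(u),v) = b(u,v) + f(v) for all v ∈ Y, has a unique minimizer on U_ad. -/

import Mathlib

open RealInnerProductSpace

set_option maxHeartbeats 2000000 in
theorem stmt_0
    {Y U H : Type*}
    [NormedAddCommGroup Y] [InnerProductSpace ℝ Y] [CompleteSpace Y]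
    [NormedAddCommGroup U] [InnerProductSpace ℝ U] [CompleteSpace U]
    [NormedAddCommGroup H] [InnerProductSpace ℝ H] [CompleteSpace H]
    (E : Y →L[ℝ] H) (ρ₁ : ℝ) (hρ₁ : 0 < ρ₁)
    (hE : ∀ y : Y, ‖E y‖ ≤ (1 / ρ₁) * ‖y‖)
    (a : Y →ₗ[ℝ] Y →ₗ[ℝ] ℝ) (γ β : ℝ) (hγ : 0 < γ) (hβ : 0 < β)
    (ha_cont : ∀ y v : Y, |a y v| ≤ γ * ‖y‖ * ‖v‖)
    (ha_coer : ∀ y : Y, β * ‖y‖ ^ 2 ≤ a y y)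
    (b : U →ₗ[ℝ] Y →ₗ[ℝ] ℝ) (κ : ℝ) (hκ : 0 < κ)
    (hb_cont : ∀ (w : U) (v : Y), |b w v| ≤ κ * ‖w‖ * ‖v‖)
    (f : Y →L[ℝ] ℝ) (z : H) (α : ℝ) (hα : 0 < α)
    (Uad : Set U) (hUne : Uad.Nonempty) (hUcl : IsClosed Uad) (hUcx : Convex ℝ Uad)
    :
    ∃! uy : U × Y, uy.1 ∈ Uad ∧ (∀ v : Y, a uy.2 v = b uy.1 v + f v) ∧
      ∀ (u' : U) (y' : Y), u' ∈ Uad → (∀ v : Y, a y' v = b u' v + f v) →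
        (1 / 2) * ‖E uy.2 - z‖ ^ 2 + (α / 2) * ‖uy.1‖ ^ 2 ≤
          (1 / 2) * ‖E y' - z‖ ^ 2 + (α / 2) * ‖u'‖ ^ 2 := by
  classical
  -- continuous versions of the bilinear forms
  set A₂ : Y →L[ℝ] Y →L[ℝ] ℝ :=
    LinearMap.mkContinuous₂ a γ (fun y v => by simpa using ha_cont y v) with hA₂def
  have hA₂ : ∀ y v : Y, A₂ y v = a y v := fun y v => rfl
  have hcoer : IsCoercive A₂ := ⟨β, hβ, fun y => by
    rw [hA₂]; calc β * ‖y‖ * ‖y‖ = β * ‖y‖ ^ 2 := by ring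
    _ ≤ a y y := ha_coer y⟩
  -- the solution operator for the variational problem with RHS ℓ
  set solve : (Y →L[ℝ] ℝ) → Y :=
    fun ℓ => hcoer.continuousLinearEquivOfBilin.symm
      ((InnerProductSpace.toDual ℝ Y).symm ℓ) with hsolvedef
  have hsolve : ∀ (ℓ : Y →L[ℝ] ℝ) (v : Y), a (solve ℓ) v = ℓ v := by
    intro ℓ v
    have h1 : hcoer.continuousLinearEquivOfBilin (solve ℓ)
        = (InnerProductSpace.toDual ℝ Y).symm ℓ :=
      hcoer.continuousLinearEquivOfBilin.apply_symm_apply _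
    have h2 := hcoer.continuousLinearEquivOfBilin_apply (solve ℓ) v
    rw [h1, InnerProductSpace.toDual_symm_apply] at h2
    rw [← hA₂]
    exact h2.symm
  have huniq : ∀ (ℓ : Y →L[ℝ] ℝ) (y : Y), (∀ v : Y, a y v = ℓ v) → y = solve ℓ := by
    intro ℓ y hy
    have hzero : a (y - solve ℓ) (y - solve ℓ) = 0 := by
      simp [map_sub, LinearMap.sub_apply, hy, hsolve]
    have hd := ha_coer (y - solve ℓ)
    rw [hzero] at hd
    have h0 : ‖y - solve ℓ‖ ^ 2 = 0 := le_antisymm (by nlinarith) (by positivity)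
    have : y - solve ℓ = 0 := by
      rwa [pow_eq_zero_iff (two_ne_zero), norm_eq_zero] at h0
    exact sub_eq_zero.mp this
  clear hsolvedef hA₂def
  clear_value solve A₂
  -- the affine structure of the solution map
  set B₂ : U →L[ℝ] Y →L[ℝ] ℝ :=
    LinearMap.mkContinuous₂ b κ (fun u v => by simpa using hb_cont u v) with hB₂def
  have hB₂ : ∀ (u : U) (v : Y), B₂ u v = b u v := fun u v => rfl
  set Tf : U → Y := fun u => solve (B₂ u) with hTfdef
  set y₀ : Y := solve f with hy₀def
  set S : U → Y := fun u => Tf u + y₀ with hSdef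
  have hS : ∀ (u : U) (v : Y), a (S u) v = b u v + f v := by
    intro u v
    simp only [hSdef, map_add, LinearMap.add_apply]
    rw [hsolve (B₂ u) v, hsolve f v, hB₂]
  have hSuniq : ∀ (u : U) (y : Y), (∀ v : Y, a y v = b u v + f v) → y = S u := by
    intro u y hy
    have hzero : a (y - S u) (y - S u) = 0 := by
      simp [map_sub, LinearMap.sub_apply, hy, hS]
    have hd := ha_coer (y - S u)
    rw [hzero] at hd
    have h0 : ‖y - S u‖ ^ 2 = 0 := le_antisymm (by nlinarith) (by positivity)
    have : y - S u = 0 := by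
      rwa [pow_eq_zero_iff (two_ne_zero), norm_eq_zero] at h0
    exact sub_eq_zero.mp this
  -- Tf is linear and bounded
  have hTadd : ∀ u u' : U, Tf (u + u') = Tf u + Tf u' := by
    intro u u'
    refine (huniq (B₂ (u + u')) (Tf u + Tf u') ?_).symm
    intro v
    simp [hTfdef, map_add, LinearMap.add_apply, hsolve, hB₂]
  have hTsmul : ∀ (c : ℝ) (u : U), Tf (c • u) = c • Tf u := by
    intro c u
    refine (huniq (B₂ (c • u)) (c • Tf u) ?_).symm
    intro v
    simp [hTfdef, map_smul, LinearMap.smul_apply, hsolve, hB₂]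
  have hTbound : ∀ u : U, ‖Tf u‖ ≤ (κ / β) * ‖u‖ := by
    intro u
    have h1 : β * ‖Tf u‖ ^ 2 ≤ a (Tf u) (Tf u) := ha_coer _
    have h2 : a (Tf u) (Tf u) = b u (Tf u) := by rw [hsolve, hB₂]
    have h3 : b u (Tf u) ≤ κ * ‖u‖ * ‖Tf u‖ := (abs_le.mp (hb_cont u (Tf u))).2
    rcases eq_or_lt_of_le (norm_nonneg (Tf u)) with h | h
    · rw [← h]; positivity
    · rw [div_mul_eq_mul_div, le_div_iff₀ hβ]
      nlinarith
  set T : U →L[ℝ] Y := LinearMap.mkContinuous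
    { toFun := Tf, map_add' := hTadd, map_smul' := hTsmul } (κ / β) hTbound with hTdef
  have hT : ∀ u : U, T u = Tf u := fun u => rfl
  set A : U →L[ℝ] H := E.comp T with hAdef
  set w : H := z - E y₀ with hwdef
  have hkey : ∀ u : U, E (S u) - z = A u - w := by
    intro u
    simp only [hSdef, hAdef, hwdef, map_add, ContinuousLinearMap.comp_apply, hT]
    abel
  clear hTfdef hy₀def hSdef hTdef hAdef hB₂def
  clear_value Tf y₀ S T A B₂
  -- the product space setup
  set ε : ℝ := Real.sqrt α with hεdef
  have hε : 0 < ε := Real.sqrt_pos.mpr hα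
  have hε2 : ε ^ 2 = α := Real.sq_sqrt hα.le
  set Φ : U →L[ℝ] WithLp 2 (H × U) :=
    (WithLp.prodContinuousLinearEquiv 2 ℝ H U).symm.toContinuousLinearMap.comp
      (A.prod (ε • ContinuousLinearMap.id ℝ U)) with hΦdef
  have hΦfst : ∀ u : U, (Φ u).fst = A u := fun u => rfl
  have hΦsnd : ∀ u : U, (Φ u).snd = ε • u := fun u => rfl
  set p : WithLp 2 (H × U) := (WithLp.equiv 2 (H × U)).symm (w, 0) with hpdef
  have hpfst : p.fst = w := rfl
  have hpsnd : p.snd = (0 : U) := rfl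
  have hnormsq : ∀ x : WithLp 2 (H × U), ‖x‖ ^ 2 = ‖x.fst‖ ^ 2 + ‖x.snd‖ ^ 2 :=
    fun x => WithLp.prod_norm_sq_eq_of_L2 x
  have hJ : ∀ u : U, ‖p - Φ u‖ ^ 2 = ‖E (S u) - z‖ ^ 2 + α * ‖u‖ ^ 2 := by
    intro u
    rw [hnormsq]
    have hfst : (p - Φ u).fst = w - A u := rfl
    have hsnd : (p - Φ u).snd = (0 : U) - ε • u := rfl
    rw [hfst, hsnd, hkey u, zero_sub, norm_neg, norm_sub_rev, norm_smul,
      Real.norm_eq_abs, abs_of_pos hε, mul_pow, hε2]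
  have hΦlow : ∀ u : U, α * ‖u‖ ^ 2 ≤ ‖Φ u‖ ^ 2 := by
    intro u
    rw [hnormsq, hΦfst, hΦsnd, norm_smul, Real.norm_eq_abs, abs_of_pos hε, mul_pow, hε2]
    have := sq_nonneg ‖A u‖
    linarith
  -- image of the admissible set
  set K : Set (WithLp 2 (H × U)) := Φ '' Uad with hKdef
  have hKne : K.Nonempty := hUne.image Φ
  have hKcx : Convex ℝ K := hUcx.linear_image (Φ : U →ₗ[ℝ] WithLp 2 (H × U))
  have hΦanti : AntilipschitzWith ⟨ε⁻¹, by positivity⟩ Φ := by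
    apply Φ.antilipschitz_of_bound
    intro u
    have h1 : (ε * ‖u‖) ^ 2 ≤ ‖Φ u‖ ^ 2 := by rw [mul_pow, hε2]; exact hΦlow u
    have h2 : ε * ‖u‖ ≤ ‖Φ u‖ := by
      have := Real.sqrt_le_sqrt h1
      rwa [Real.sqrt_sq (by positivity), Real.sqrt_sq (norm_nonneg _)] at this
    show ‖u‖ ≤ (ε⁻¹ : ℝ) * ‖Φ u‖
    calc ‖u‖ = ε⁻¹ * (ε * ‖u‖) := by field_simp
    _ ≤ ε⁻¹ * ‖Φ u‖ := by
        apply mul_le_mul_of_nonneg_left h2 (by positivity)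
  have hKcl : IsClosed K :=
    (hΦanti.isClosedEmbedding Φ.uniformContinuous).isClosedMap Uad hUcl
  -- existence of the projection
  obtain ⟨v, hvK, hvmin⟩ :=
    exists_norm_eq_iInf_of_complete_convex hKne hKcl.isComplete hKcx p
  obtain ⟨ustar, hustar, rfl⟩ := hvK
  have hbdd : BddBelow (Set.range fun w' : K => ‖p - (w' : WithLp 2 (H × U))‖) := by
    refine ⟨0, ?_⟩
    rintro x ⟨w', rfl⟩
    exact norm_nonneg _
  have hmin : ∀ u' ∈ Uad, ‖p - Φ ustar‖ ≤ ‖p - Φ u'‖ := by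
    intro u' hu'
    rw [hvmin]
    exact ciInf_le hbdd (⟨Φ u', ⟨u', hu', rfl⟩⟩ : K)
  -- the candidate solution
  refine ⟨(ustar, S ustar), ⟨hustar, hS ustar, ?_⟩, ?_⟩
  · -- minimality
    intro u' y' hu' hy'
    have hy's : y' = S u' := hSuniq u' y' hy'
    have h1 := hmin u' hu'
    have h2 : ‖p - Φ ustar‖ ^ 2 ≤ ‖p - Φ u'‖ ^ 2 :=
      pow_le_pow_left₀ (norm_nonneg _) h1 2
    rw [hJ ustar, hJ u'] at h2
    rw [hy's]
    simp only
    nlinarith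
  · -- uniqueness
    rintro ⟨u₂, y₂⟩ ⟨hu₂, hy₂, hmin₂⟩
    have hy₂s : y₂ = S u₂ := hSuniq u₂ y₂ hy₂
    -- the two costs agree
    have hle1 := hmin₂ ustar (S ustar) hustar (hS ustar)
    have hle2 : ‖p - Φ ustar‖ ^ 2 ≤ ‖p - Φ u₂‖ ^ 2 :=
      pow_le_pow_left₀ (norm_nonneg _) (hmin u₂ hu₂) 2
    have heq : ‖p - Φ u₂‖ ^ 2 = ‖p - Φ ustar‖ ^ 2 := by
      simp only at hle1
      rw [hy₂s] at hle1
      rw [hJ ustar, hJ u₂] at hle2 ⊢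
      nlinarith
    -- parallelogram law forces u₂ = ustar
    have hu₂star : u₂ = ustar := by
      by_contra hne
      set m : U := (2 : ℝ)⁻¹ • (ustar + u₂) with hmdef
      have hmUad : m ∈ Uad := by
        have := hUcx hustar hu₂ (by norm_num : (0:ℝ) ≤ 1/2) (by norm_num : (0:ℝ) ≤ 1/2)
          (by norm_num)
        simpa [hmdef, smul_add, smul_smul] using this
      have hpar := parallelogram_law_with_norm ℝ (p - Φ ustar) (p - Φ u₂)
      have hΦm : Φ m = (2 : ℝ)⁻¹ • (Φ ustar + Φ u₂) := by rw [hmdef, map_smul, map_add]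
      have hsum : (p - Φ ustar) + (p - Φ u₂) = (2 : ℝ) • (p - Φ m) := by
        rw [hΦm, smul_sub, smul_smul]
        norm_num
        rw [two_smul]
        abel
      have hdiff : (p - Φ ustar) - (p - Φ u₂) = Φ u₂ - Φ ustar := by abel
      have hmge : ‖p - Φ ustar‖ ≤ ‖p - Φ m‖ := hmin m hmUad
      have hΦne : Φ u₂ - Φ ustar ≠ 0 := by
        intro h
        rw [← map_sub] at h
        have hlow := hΦlow (u₂ - ustar)
        rw [h] at hlow
        simp only [norm_zero] at hlow
        have : ‖u₂ - ustar‖ ^ 2 ≤ 0 := by nlinarith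
        have h0 : ‖u₂ - ustar‖ ^ 2 = 0 := le_antisymm this (by positivity)
        rw [pow_eq_zero_iff (two_ne_zero), norm_eq_zero, sub_eq_zero] at h0
        exact hne h0
      have hΦpos : 0 < ‖Φ u₂ - Φ ustar‖ := norm_pos_iff.mpr hΦne
      have hsumnorm : ‖(p - Φ ustar) + (p - Φ u₂)‖ = 2 * ‖p - Φ m‖ := by
        rw [hsum, norm_smul]
        norm_num
      rw [hdiff, hsumnorm] at hpar
      nlinarith [hmge, norm_nonneg (p - Φ ustar), norm_nonneg (p - Φ m), heq,
        sq_nonneg ‖Φ u₂ - Φ ustar‖]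
    rw [Prod.ext_iff]
    exact ⟨hu₂star, by rw [hy₂s, hu₂star]⟩
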